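/- Let a be a positive integer and b a nonzero integer. Then there exist arbitrarily large integers m such that a·m² + b is not a perfect square. -/
import Mathlib

theorem key_lemma (a b : ℤ) (ha : 0 < a) (hb : b ≠ 0) (m : ℤ) (hm : |b| + 1 ≤ m)
    (h1 : IsSquare (a * m ^ 2 + b)) (h2 : IsSquare (a * (m+1) ^ 2 + b)) : False := by
  obtain ⟨s, hs⟩ := h1
  obtain ⟨u, hu⟩ := h2
  have hB1 : 1 ≤ |b| := Int.one_le_abs hb
  have hbl : -|b| ≤ b := neg_abs_le b
  have hbu : b ≤ |b| := le_abs_self b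
  have hm2 : 2 ≤ m := by linarith
  set P := a * (m * (m+1)) + b with hPdef
  obtain ⟨S, hS0, hE⟩ : ∃ S : ℤ, 0 ≤ S ∧ S ^ 2 = P ^ 2 + a * b := by
    refine ⟨|s| * |u|, mul_nonneg (abs_nonneg s) (abs_nonneg u), ?_⟩
    have hs' : a * m ^ 2 + b = |s| * |s| := by rw [abs_mul_abs_self]; exact hs
    have hu' : a * (m+1) ^ 2 + b = |u| * |u| := by rw [abs_mul_abs_self]; exact hu
    have : (|s| * |u|) ^ 2 = (a * m ^ 2 + b) * (a * (m+1) ^ 2 + b) := by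
      rw [hs', hu']; ring
    rw [this, hPdef]; ring
  have hab : a * (-|b|) ≤ a * b := by
    apply mul_le_mul_of_nonneg_left hbl ha.le
  have ham : a * (|b| + 1) ≤ a * m := mul_le_mul_of_nonneg_left hm ha.le
  have hmm : (|b| + 1) * (|b| + 1) ≤ m * m := by
    apply mul_le_mul hm hm (by positivity) (by linarith)
  have hamm : a * ((|b|+1)*(|b|+1)) ≤ a * (m * m) :=
    mul_le_mul_of_nonneg_left hmm ha.le
  have hP : 1 ≤ P := by nlinarith
  rcases lt_trichotomy (a * b) 0 with h | h | h
  · have hlt : S ^ 2 < P ^ 2 := by nlinarith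
    have hle : S ≤ P - 1 := by
      by_contra hc
      push_neg at hc
      have : P ^ 2 ≤ S ^ 2 := by
        have : P ≤ S := by linarith
        exact pow_le_pow_left₀ (by linarith) this 2
      linarith
    have hsq : S ^ 2 ≤ (P - 1) ^ 2 := pow_le_pow_left₀ hS0 hle 2
    nlinarith
  · rcases mul_eq_zero.mp h with h' | h'
    · exact absurd h' (by positivity)
    · exact hb h'
  · have hlt : P ^ 2 < S ^ 2 := by nlinarith
    have hle : P + 1 ≤ S := by
      by_contra hc
      push_neg at hc
      have : S ≤ P := by linarith
      have : S ^ 2 ≤ P ^ 2 := pow_le_pow_left₀ hS0 this 2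
      linarith
    have hsq : (P + 1) ^ 2 ≤ S ^ 2 := pow_le_pow_left₀ (by linarith) hle 2
    nlinarith

theorem stmt6 (a b : ℤ) (ha : 0 < a) (hb : b ≠ 0) :
    ∀ N : ℤ, ∃ m : ℤ, N ≤ m ∧ ¬ IsSquare (a * m ^ 2 + b) := by
  intro N
  set m := max N (|b| + 1) with hmdef
  have hmN : N ≤ m := le_max_left _ _
  have hmb : |b| + 1 ≤ m := le_max_right _ _
  by_cases h : IsSquare (a * m ^ 2 + b)
  · exact ⟨m + 1, by linarith, fun h2 => key_lemma a b ha hb m hmb h h2⟩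
  · exact ⟨m, hmN, h⟩
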